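/- The curve β(s) = (a cos(ws), a sin(ws), bws) with a,b > 0, w > 0, a²w² + b²w² = 1, is unit-speed with curvature κ = aw² and torsion τ = bw², and applying the construction once more (κ̄(s) = aw² cos(bw²s), τ̄(s) = aw² sin(bw²s)) yields a curve J²(γ) whose curvature and torsion satisfy κ̄² + τ̄² = a²w⁴ (constant); i.e. J²(γ) is a curve of constant precession (a Mannheim curve). -/

import Mathlib

noncomputable def det3 (a b c : EuclideanSpace ℝ (Fin 3)) : ℝ :=
  Matrix.det (Matrix.of ![(a : Fin 3 → ℝ), b, c])

noncomputable def vec3 (x y z : ℝ) : EuclideanSpace ℝ (Fin 3) := WithLp.toLp 2 ![x, y, z]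

lemma hasDerivAt_vec3 {f g h : ℝ → ℝ} {f' g' h' : ℝ} {s : ℝ}
    (hf : HasDerivAt f f' s) (hg : HasDerivAt g g' s) (hh : HasDerivAt h h' s) :
    HasDerivAt (fun t => vec3 (f t) (g t) (h t)) (vec3 f' g' h') s := by
  have key : HasDerivAt (fun t => (![f t, g t, h t] : Fin 3 → ℝ)) (![f', g', h'] : Fin 3 → ℝ) s := by
    apply hasDerivAt_pi.mpr
    intro i
    fin_cases i
    · simpa using hf
    · simpa using hg
    · simpa using hh
  have e := ((EuclideanSpace.equiv (Fin 3) ℝ).symm : (Fin 3 → ℝ) →L[ℝ] EuclideanSpace ℝ (Fin 3))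
  exact (((EuclideanSpace.equiv (Fin 3) ℝ).symm : (Fin 3 → ℝ) →L[ℝ] EuclideanSpace ℝ (Fin 3)).hasFDerivAt.comp_hasDerivAt s key)

lemma norm_vec3 (x y z : ℝ) : ‖vec3 x y z‖ = Real.sqrt (x ^ 2 + y ^ 2 + z ^ 2) := by
  rw [show vec3 x y z = (EuclideanSpace.equiv (Fin 3) ℝ).symm ![x, y, z] from rfl]
  rw [EuclideanSpace.norm_eq]
  simp [Fin.sum_univ_three, Real.norm_eq_abs, sq_abs]
lemma HasDerivAt.of_eq {F : Type*} [NormedAddCommGroup F] [NormedSpace ℝ F]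
    {f : ℝ → F} {v v' : F} {x : ℝ} (h : HasDerivAt f v x) (e : v' = v) :
    HasDerivAt f v' x := e ▸ h

theorem stmt_12 (a b w : ℝ) (ha : 0 < a) (hb : 0 < b) (hw : 0 < w)
    (h1 : a ^ 2 * w ^ 2 + b ^ 2 * w ^ 2 = 1)
    (β : ℝ → EuclideanSpace ℝ (Fin 3))
    (hβ : ∀ s, β s = vec3 (a * Real.cos (w * s)) (a * Real.sin (w * s)) (b * w * s)) :
    (∀ s : ℝ, ‖deriv β s‖ = 1) ∧
    (∀ s : ℝ, ‖deriv (deriv β) s‖ = a * w ^ 2) ∧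
    (∀ s : ℝ,
      det3 (deriv β s) (deriv (deriv β) s) (deriv (deriv (deriv β)) s)
        / (a * w ^ 2) ^ 2 = b * w ^ 2) ∧
    (∀ s : ℝ,
      (a * w ^ 2 * Real.cos (b * w ^ 2 * s)) ^ 2
        + (a * w ^ 2 * Real.sin (b * w ^ 2 * s)) ^ 2 = a ^ 2 * w ^ 4) := by
  have hlin : ∀ (c : ℝ) (s : ℝ), HasDerivAt (fun t : ℝ => c * t) c s := by
    intro c s
    simpa using (hasDerivAt_id s).const_mul c
  have hcos : ∀ (c : ℝ) (s : ℝ),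
      HasDerivAt (fun t => Real.cos (c * t)) (-(c * Real.sin (c * s))) s := by
    intro c s
    exact ((Real.hasDerivAt_cos (c * s)).comp s (hlin c s)).of_eq (by ring)
  have hsin : ∀ (c : ℝ) (s : ℝ),
      HasDerivAt (fun t => Real.sin (c * t)) (c * Real.cos (c * s)) s := by
    intro c s
    exact ((Real.hasDerivAt_sin (c * s)).comp s (hlin c s)).of_eq (by ring)
  have hβeq : β = fun s => vec3 (a * Real.cos (w * s)) (a * Real.sin (w * s)) (b * w * s) :=
    funext hβ
  have hd1 : deriv β = fun s =>
      vec3 (-(a * w) * Real.sin (w * s)) (a * w * Real.cos (w * s)) (b * w) := by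
    funext s
    rw [hβeq]
    exact (hasDerivAt_vec3 (((hcos w s).const_mul a).of_eq (by ring))
      (((hsin w s).const_mul a).of_eq (by ring)) (hlin (b * w) s)).deriv
  have hd2 : deriv (deriv β) = fun s =>
      vec3 (-(a * w ^ 2) * Real.cos (w * s)) (-(a * w ^ 2) * Real.sin (w * s)) 0 := by
    funext s
    rw [hd1]
    exact (hasDerivAt_vec3 (((hsin w s).const_mul (-(a * w))).of_eq (by ring))
      (((hcos w s).const_mul (a * w)).of_eq (by ring)) (hasDerivAt_const s (b * w))).deriv
  have hd3 : deriv (deriv (deriv β)) = fun s =>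
      vec3 (a * w ^ 3 * Real.sin (w * s)) (-(a * w ^ 3) * Real.cos (w * s)) 0 := by
    funext s
    rw [hd2]
    exact (hasDerivAt_vec3 (((hcos w s).const_mul (-(a * w ^ 2))).of_eq (by ring))
      (((hsin w s).const_mul (-(a * w ^ 2))).of_eq (by ring)) (hasDerivAt_const s (0 : ℝ))).deriv
  have pyth : ∀ s : ℝ, Real.sin s ^ 2 + Real.cos s ^ 2 = 1 := Real.sin_sq_add_cos_sq
  refine ⟨?_, ?_, ?_, ?_⟩
  · intro s
    rw [hd1, norm_vec3]
    have h2 := pyth (w * s)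
    rw [show (-(a * w) * Real.sin (w * s)) ^ 2 + (a * w * Real.cos (w * s)) ^ 2 + (b * w) ^ 2
        = a ^ 2 * w ^ 2 * (Real.sin (w * s) ^ 2 + Real.cos (w * s) ^ 2) + b ^ 2 * w ^ 2 by ring,
      h2]
    rw [show a ^ 2 * w ^ 2 * 1 + b ^ 2 * w ^ 2 = 1 by linarith]
    exact Real.sqrt_one
  · intro s
    rw [hd2, norm_vec3]
    have h2 := pyth (w * s)
    rw [show (-(a * w ^ 2) * Real.cos (w * s)) ^ 2 + (-(a * w ^ 2) * Real.sin (w * s)) ^ 2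
        + (0 : ℝ) ^ 2 = (a * w ^ 2) ^ 2 * (Real.sin (w * s) ^ 2 + Real.cos (w * s) ^ 2) by ring,
      h2, mul_one]
    exact Real.sqrt_sq (by positivity)
  · intro s
    rw [hd3, hd2, hd1]
    have h2 := pyth (w * s)
    have hne : (a * w ^ 2) ^ 2 ≠ 0 := by positivity
    beta_reduce
    rw [det3]
    rw [show (vec3 (-(a * w) * Real.sin (w * s)) (a * w * Real.cos (w * s)) (b * w) : Fin 3 → ℝ)
        = ![-(a * w) * Real.sin (w * s), a * w * Real.cos (w * s), b * w] from rfl]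
    rw [show (vec3 (-(a * w ^ 2) * Real.cos (w * s)) (-(a * w ^ 2) * Real.sin (w * s)) 0 :
        Fin 3 → ℝ) = ![-(a * w ^ 2) * Real.cos (w * s), -(a * w ^ 2) * Real.sin (w * s), 0]
        from rfl]
    rw [show (vec3 (a * w ^ 3 * Real.sin (w * s)) (-(a * w ^ 3) * Real.cos (w * s)) 0 :
        Fin 3 → ℝ) = ![a * w ^ 3 * Real.sin (w * s), -(a * w ^ 3) * Real.cos (w * s), 0]
        from rfl]
    rw [Matrix.det_fin_three]
    simp only [Matrix.of_apply, Matrix.cons_val', Matrix.cons_val_zero, Matrix.cons_val_one,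
      Matrix.head_cons, Matrix.empty_val', Matrix.cons_val_fin_one, Matrix.head_fin_const,
      Matrix.cons_val_two, Matrix.tail_cons]
    field_simp
    linear_combination (b * w ^ 3) * h2
  · intro s
    have h2 := pyth (b * w ^ 2 * s)
    nlinarith [h2]
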